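/- Let m ≥ 1 be a natural number. The 2m functions f_j(y) = exp(y³/6) yʲ e₁ (j = 0,…,m-2) and g_k(y) = exp(y³/6)(m yᵏ e₂ - k y^{k-1} e₁) (k = 0,…,m) are eigenspace-generating for the operator Ĥψ = ψ'' + (-(1/4)y⁴ - m y + σ₃ y + σ₁)ψ in the sense that Ĥ maps the span of these 2m functions into itself. -/

import Mathlib

def σ1 : Matrix (Fin 2) (Fin 2) ℂ := !![0, 1; 1, 0]
def σ3 : Matrix (Fin 2) (Fin 2) ℂ := !![1, 0; 0, -1]

def e1 : Fin 2 → ℂ := ![1, 0]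
def e2 : Fin 2 → ℂ := ![0, 1]

/-- The basis functions f_j(y) = exp(y³/6) yʲ e₁ (j = 0,…,m-2) and
g_k(y) = exp(y³/6)(m yᵏ e₂ - k y^{k-1} e₁) (k = 0,…,m). -/
noncomputable def basisSet (m : ℕ) : Set (ℝ → Fin 2 → ℂ) :=
  {f | (∃ j : ℕ, j + 2 ≤ m ∧ f = fun (y : ℝ) =>
          Complex.exp ((y : ℂ) ^ 3 / 6) • (((y : ℂ) ^ j) • e1)) ∨
       (∃ k : ℕ, k ≤ m ∧ f = fun (y : ℝ) =>
          Complex.exp ((y : ℂ) ^ 3 / 6) •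
            (((m : ℂ) * (y : ℂ) ^ k) • e2 - ((k : ℂ) * (y : ℂ) ^ (k - 1)) • e1))}

/-- Ĥψ(y) = ψ''(y) + (-(1/4)y⁴ - m y + σ₃ y + σ₁)ψ(y). -/
noncomputable def Hop (m : ℕ) : (ℝ → Fin 2 → ℂ) → (ℝ → Fin 2 → ℂ) :=
  fun ψ y => deriv (deriv ψ) y +
    ((-(1/4 : ℂ) * (y : ℂ) ^ 4 - (m : ℂ) * (y : ℂ)) • (1 : Matrix (Fin 2) (Fin 2) ℂ)
      + (y : ℂ) • σ3 + σ1).mulVec (ψ y)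

/-! ### Auxiliary definitions and lemmas -/

noncomputable def Ew (y : ℝ) : ℂ := Complex.exp ((y : ℂ) ^ 3 / 6)
noncomputable def uu (n : ℕ) (y : ℝ) : ℂ := Ew y * (y : ℂ) ^ n

noncomputable def FF (j : ℕ) : ℝ → Fin 2 → ℂ := fun y => uu j y • e1
noncomputable def GG (m k : ℕ) : ℝ → Fin 2 → ℂ :=
  fun y => (-(k : ℂ) * uu (k - 1) y) • e1 + ((m : ℂ) * uu k y) • e2

lemma hasDerivAt_uu (n : ℕ) (y : ℝ) :
    HasDerivAt (uu n) ((1/2 : ℂ) * uu (n + 2) y + (n : ℂ) * uu (n - 1) y) y := by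
  have h3 : HasDerivAt (fun x : ℝ => ((x : ℂ)) ^ 3 / 6) ((y : ℂ) ^ 2 / 2) y := by
    have := ((hasDerivAt_pow 3 ((y : ℝ) : ℂ)).comp_ofReal).div_const 6
    refine this.congr_deriv ?_
    push_cast
    ring
  have hE : HasDerivAt Ew ((y : ℂ) ^ 2 / 2 * Ew y) y := by
    have := h3.cexp
    simp only [Ew, mul_comm] at this ⊢
    exact this
  have hp : HasDerivAt (fun x : ℝ => ((x : ℂ)) ^ n) ((n : ℂ) * (y : ℂ) ^ (n - 1)) y :=
    (hasDerivAt_pow n ((y : ℝ) : ℂ)).comp_ofReal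
  have h2 := hE.mul hp
  have heq : (1/2 : ℂ) * uu (n + 2) y + (n : ℂ) * uu (n - 1) y
      = (y : ℂ) ^ 2 / 2 * Ew y * (y : ℂ) ^ n + Ew y * ((n : ℂ) * (y : ℂ) ^ (n - 1)) := by
    simp only [uu]
    rw [pow_add]
    ring
  rw [heq]
  exact h2

lemma mulVec_e (m : ℕ) (y : ℝ) (a b : ℂ) :
    ((-(1/4 : ℂ) * (y : ℂ) ^ 4 - (m : ℂ) * (y : ℂ)) • (1 : Matrix (Fin 2) (Fin 2) ℂ)
      + (y : ℂ) • σ3 + σ1).mulVec (a • e1 + b • e2)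
    = ((-(1/4 : ℂ) * (y : ℂ) ^ 4 - (m : ℂ) * (y : ℂ) + y) * a + b) • e1
      + ((-(1/4 : ℂ) * (y : ℂ) ^ 4 - (m : ℂ) * (y : ℂ) - y) * b + a) • e2 := by
  funext i
  set_option linter.unnecessarySeqFocus false in
  fin_cases i <;>
    simp [Matrix.mulVec, dotProduct, Fin.sum_univ_two, σ1, σ3, e1, e2,
      Matrix.one_apply, Pi.add_apply, Pi.smul_apply, smul_eq_mul] <;> ring

lemma memFF {m j : ℕ} (h : j + 2 ≤ m) : FF j ∈ Submodule.span ℂ (basisSet m) := by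
  apply Submodule.subset_span
  left
  exact ⟨j, h, by funext y; simp [FF, uu, Ew, smul_smul]⟩

lemma memGG {m k : ℕ} (h : k ≤ m) : GG m k ∈ Submodule.span ℂ (basisSet m) := by
  apply Submodule.subset_span
  right
  refine ⟨k, h, ?_⟩
  funext y
  simp only [GG, uu, Ew]
  module

def Qp (m : ℕ) (ψ : ℝ → Fin 2 → ℂ) : Prop :=
  ∃ φ χ : ℝ → Fin 2 → ℂ, (∀ y, HasDerivAt ψ (φ y) y) ∧ (∀ y, HasDerivAt φ (χ y) y) ∧
    (fun y : ℝ => χ y +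
      ((-(1/4 : ℂ) * (y : ℂ) ^ 4 - (m : ℂ) * (y : ℂ)) • (1 : Matrix (Fin 2) (Fin 2) ℂ)
        + (y : ℂ) • σ3 + σ1).mulVec (ψ y)) ∈ Submodule.span ℂ (basisSet m)

set_option maxHeartbeats 1000000 in
lemma QF (m j : ℕ) (hm : 1 ≤ m) (hj : j + 2 ≤ m) : Qp m (FF j) := by
  have hm0 : (m : ℂ) ≠ 0 := Nat.cast_ne_zero.mpr (by omega)
  refine ⟨fun y => ((1/2 : ℂ) * uu (j + 2) y + (j : ℂ) * uu (j - 1) y) • e1,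
    fun y => ((1/2 : ℂ) * ((1/2 : ℂ) * uu (j + 2 + 2) y + ((j + 2 : ℕ) : ℂ) * uu (j + 2 - 1) y)
      + (j : ℂ) * ((1/2 : ℂ) * uu (j - 1 + 2) y + ((j - 1 : ℕ) : ℂ) * uu (j - 1 - 1) y)) • e1,
    fun y => (hasDerivAt_uu j y).smul_const e1,
    fun y => ((((hasDerivAt_uu (j + 2) y).const_mul (1/2 : ℂ)).add
      ((hasDerivAt_uu (j - 1) y).const_mul (j : ℂ))).smul_const e1), ?_⟩
  have heq : (fun y : ℝ => ((1/2 : ℂ) * ((1/2 : ℂ) * uu (j + 2 + 2) y + ((j + 2 : ℕ) : ℂ) * uu (j + 2 - 1) y)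
      + (j : ℂ) * ((1/2 : ℂ) * uu (j - 1 + 2) y + ((j - 1 : ℕ) : ℂ) * uu (j - 1 - 1) y)) • e1 +
      ((-(1/4 : ℂ) * (y : ℂ) ^ 4 - (m : ℂ) * (y : ℂ)) • (1 : Matrix (Fin 2) (Fin 2) ℂ)
        + (y : ℂ) • σ3 + σ1).mulVec (FF j y))
      = (1/(m : ℂ)) • GG m j + (((j : ℂ) + 2 - (m : ℂ)) • FF (j + 1) +
        (((j : ℂ) * ((j - 1 : ℕ) : ℂ)) • FF (j - 2) + ((j : ℂ)/(m : ℂ)) • FF (j - 1))) := by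
    funext y
    rw [show FF j y = uu j y • e1 + (0 : ℂ) • e2 from by simp [FF], mulVec_e]
    simp only [Pi.add_apply, Pi.smul_apply, FF, GG]
    match_scalars
    · simp only [uu]
      rcases j with _ | n <;>
        simp only [Nat.add_sub_cancel, show ∀ n : ℕ, n + 1 - 2 = n - 1 from fun _ => rfl,
          Nat.zero_sub, Nat.cast_zero, Nat.cast_succ, pow_zero] <;>
        push_cast <;> field_simp <;> ring
    · simp only [uu]
      field_simp
      ring
  rw [heq]
  refine Submodule.add_mem _ (Submodule.smul_mem _ _ (memGG (by omega)))
    (Submodule.add_mem _ ?_ (Submodule.add_mem _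
      (Submodule.smul_mem _ _ (memFF (by omega))) (Submodule.smul_mem _ _ (memFF (by omega)))))
  by_cases h : j + 3 ≤ m
  · exact Submodule.smul_mem _ _ (memFF (by omega))
  · have hz : ((j : ℂ) + 2 - (m : ℂ)) = 0 := by
      have hme : m = j + 2 := by omega
      subst hme
      push_cast
      ring
    rw [hz, zero_smul]
    exact Submodule.zero_mem _

set_option maxHeartbeats 1000000 in
lemma QG (m k : ℕ) (hm : 1 ≤ m) (hk : k ≤ m) : Qp m (GG m k) := by
  have hm0 : (m : ℂ) ≠ 0 := Nat.cast_ne_zero.mpr (by omega)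
  refine ⟨fun y => (-(k : ℂ) * ((1/2 : ℂ) * uu (k - 1 + 2) y + ((k - 1 : ℕ) : ℂ) * uu (k - 1 - 1) y)) • e1
      + ((m : ℂ) * ((1/2 : ℂ) * uu (k + 2) y + (k : ℂ) * uu (k - 1) y)) • e2,
    fun y => (-(k : ℂ) * ((1/2 : ℂ) * ((1/2 : ℂ) * uu (k - 1 + 2 + 2) y + ((k - 1 + 2 : ℕ) : ℂ) * uu (k - 1 + 2 - 1) y)
        + ((k - 1 : ℕ) : ℂ) * ((1/2 : ℂ) * uu (k - 1 - 1 + 2) y + ((k - 1 - 1 : ℕ) : ℂ) * uu (k - 1 - 1 - 1) y))) • e1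
      + ((m : ℂ) * ((1/2 : ℂ) * ((1/2 : ℂ) * uu (k + 2 + 2) y + ((k + 2 : ℕ) : ℂ) * uu (k + 2 - 1) y)
        + (k : ℂ) * ((1/2 : ℂ) * uu (k - 1 + 2) y + ((k - 1 : ℕ) : ℂ) * uu (k - 1 - 1) y))) • e2,
    fun y => (((hasDerivAt_uu (k - 1) y).const_mul (-(k : ℂ))).smul_const e1).add
      (((hasDerivAt_uu k y).const_mul (m : ℂ)).smul_const e2),
    fun y => ((((hasDerivAt_uu (k - 1 + 2) y).const_mul (1/2 : ℂ)).add
        ((hasDerivAt_uu (k - 1 - 1) y).const_mul ((k - 1 : ℕ) : ℂ))).const_mul (-(k : ℂ))|>.smul_const e1).add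
      ((((hasDerivAt_uu (k + 2) y).const_mul (1/2 : ℂ)).add
        ((hasDerivAt_uu (k - 1) y).const_mul (k : ℂ))).const_mul (m : ℂ)|>.smul_const e2), ?_⟩
  have heq : (fun y : ℝ => ((-(k : ℂ) * ((1/2 : ℂ) * ((1/2 : ℂ) * uu (k - 1 + 2 + 2) y + ((k - 1 + 2 : ℕ) : ℂ) * uu (k - 1 + 2 - 1) y)
        + ((k - 1 : ℕ) : ℂ) * ((1/2 : ℂ) * uu (k - 1 - 1 + 2) y + ((k - 1 - 1 : ℕ) : ℂ) * uu (k - 1 - 1 - 1) y))) • e1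
      + ((m : ℂ) * ((1/2 : ℂ) * ((1/2 : ℂ) * uu (k + 2 + 2) y + ((k + 2 : ℕ) : ℂ) * uu (k + 2 - 1) y)
        + (k : ℂ) * ((1/2 : ℂ) * uu (k - 1 + 2) y + ((k - 1 : ℕ) : ℂ) * uu (k - 1 - 1) y))) • e2) +
      ((-(1/4 : ℂ) * (y : ℂ) ^ 4 - (m : ℂ) * (y : ℂ)) • (1 : Matrix (Fin 2) (Fin 2) ℂ)
        + (y : ℂ) • σ3 + σ1).mulVec (GG m k y))
      = ((k : ℂ) - (m : ℂ)) • GG m (k + 1) + (((k : ℂ) * ((k - 1 : ℕ) : ℂ)) • GG m (k - 2) +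
        ((-((k : ℂ)/(m : ℂ))) • GG m (k - 1) +
         (-((k : ℂ) * ((k - 1 : ℕ) : ℂ)/(m : ℂ))) • FF (k - 2))) := by
    funext y
    rw [show GG m k y = (-(k : ℂ) * uu (k - 1) y) • e1 + ((m : ℂ) * uu k y) • e2 from rfl, mulVec_e]
    simp only [Pi.add_apply, Pi.smul_apply, FF, GG]
    match_scalars <;> simp only [uu] <;>
      rcases k with _ | _ | _ | n <;>
        simp only [Nat.add_sub_cancel,
          show ∀ n : ℕ, n + 2 - 1 = n + 1 from fun _ => rfl,
          show ∀ n : ℕ, n + 3 - 1 = n + 2 from fun _ => rfl,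
          show ∀ n : ℕ, n + 3 - 2 = n + 1 from fun _ => rfl,
          show ∀ n : ℕ, n + 2 - 2 = n from fun _ => rfl,
          show ∀ n : ℕ, n + 1 - 2 = n - 1 from fun _ => rfl,
          show ∀ n : ℕ, n + 4 - 1 = n + 3 from fun _ => rfl,
          Nat.zero_sub, Nat.cast_zero, Nat.cast_succ, Nat.cast_ofNat, pow_zero] <;>
        push_cast <;> field_simp <;> ring
  rw [heq]
  refine Submodule.add_mem _ ?_ (Submodule.add_mem _
    (Submodule.smul_mem _ _ (memGG (by omega)))
    (Submodule.add_mem _ (Submodule.smul_mem _ _ (memGG (by omega))) ?_))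
  · by_cases h : k + 1 ≤ m
    · exact Submodule.smul_mem _ _ (memGG h)
    · have hz : ((k : ℂ) - (m : ℂ)) = 0 := by
        have hme : m = k := by omega
        subst hme
        ring
      rw [hz, zero_smul]
      exact Submodule.zero_mem _
  · by_cases h : 2 ≤ k
    · exact Submodule.smul_mem _ _ (memFF (by omega))
    · have hz : (-((k : ℂ) * ((k - 1 : ℕ) : ℂ)/(m : ℂ))) = 0 := by
        interval_cases k <;> simp
      rw [hz, zero_smul]
      exact Submodule.zero_mem _

set_option maxHeartbeats 1000000 in
theorem stmt_19 (m : ℕ) (hm : 1 ≤ m) :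
    ∀ ψ ∈ Submodule.span ℂ (basisSet m),
      Hop m ψ ∈ Submodule.span ℂ (basisSet m) := by
  intro ψ hψ
  have key : Qp m ψ := by
    induction hψ using Submodule.span_induction with
    | mem x hx =>
      obtain ⟨j, hj, rfl⟩ | ⟨k, hk, rfl⟩ := hx
      · have hFFeq : (fun (y : ℝ) => Complex.exp ((y : ℂ) ^ 3 / 6) • (((y : ℂ) ^ j) • e1))
            = FF j := by
          funext y
          simp [FF, uu, Ew, smul_smul]
        rw [hFFeq]
        exact QF m j hm hj
      · have hGGeq : (fun (y : ℝ) => Complex.exp ((y : ℂ) ^ 3 / 6) •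
            (((m : ℂ) * (y : ℂ) ^ k) • e2 - ((k : ℂ) * (y : ℂ) ^ (k - 1)) • e1))
            = GG m k := by
          funext y
          simp only [GG, uu, Ew]
          module
        rw [hGGeq]
        exact QG m k hm hk
    | zero =>
      refine ⟨0, 0, fun y => hasDerivAt_const y 0, fun y => hasDerivAt_const y 0, ?_⟩
      have hz : (fun y : ℝ => (0 : ℝ → Fin 2 → ℂ) y +
          ((-(1/4 : ℂ) * (y : ℂ) ^ 4 - (m : ℂ) * (y : ℂ)) • (1 : Matrix (Fin 2) (Fin 2) ℂ)
            + (y : ℂ) • σ3 + σ1).mulVec ((0 : ℝ → Fin 2 → ℂ) y)) = 0 := by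
        funext y
        simp [Matrix.mulVec_zero]
      rw [hz]
      exact Submodule.zero_mem _
    | add x y hx hy ihx ihy =>
      obtain ⟨φ, χ, h1, h2, h3⟩ := ihx
      obtain ⟨φ', χ', h1', h2', h3'⟩ := ihy
      refine ⟨φ + φ', χ + χ', fun t => (h1 t).add (h1' t), fun t => (h2 t).add (h2' t), ?_⟩
      have hsum : (fun t : ℝ => (χ + χ') t +
          ((-(1/4 : ℂ) * (t : ℂ) ^ 4 - (m : ℂ) * (t : ℂ)) • (1 : Matrix (Fin 2) (Fin 2) ℂ)
            + (t : ℂ) • σ3 + σ1).mulVec ((x + y) t))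
          = (fun t : ℝ => χ t +
          ((-(1/4 : ℂ) * (t : ℂ) ^ 4 - (m : ℂ) * (t : ℂ)) • (1 : Matrix (Fin 2) (Fin 2) ℂ)
            + (t : ℂ) • σ3 + σ1).mulVec (x t))
          + (fun t : ℝ => χ' t +
          ((-(1/4 : ℂ) * (t : ℂ) ^ 4 - (m : ℂ) * (t : ℂ)) • (1 : Matrix (Fin 2) (Fin 2) ℂ)
            + (t : ℂ) • σ3 + σ1).mulVec (y t)) := by
        funext t
        simp only [Pi.add_apply, Matrix.mulVec_add]
        abel
      rw [hsum]
      exact Submodule.add_mem _ h3 h3'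
    | smul a x hx ih =>
      obtain ⟨φ, χ, h1, h2, h3⟩ := ih
      refine ⟨a • φ, a • χ, fun t => (h1 t).const_smul a, fun t => (h2 t).const_smul a, ?_⟩
      have hs : (fun t : ℝ => (a • χ) t +
          ((-(1/4 : ℂ) * (t : ℂ) ^ 4 - (m : ℂ) * (t : ℂ)) • (1 : Matrix (Fin 2) (Fin 2) ℂ)
            + (t : ℂ) • σ3 + σ1).mulVec ((a • x) t))
          = a • (fun t : ℝ => χ t +
          ((-(1/4 : ℂ) * (t : ℂ) ^ 4 - (m : ℂ) * (t : ℂ)) • (1 : Matrix (Fin 2) (Fin 2) ℂ)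
            + (t : ℂ) • σ3 + σ1).mulVec (x t)) := by
        funext t
        simp only [Pi.smul_apply, Matrix.mulVec_smul, smul_add]
      rw [hs]
      exact Submodule.smul_mem _ _ h3
  obtain ⟨φ, χ, h1, h2, h3⟩ := key
  have hd1 : deriv ψ = φ := funext fun y => (h1 y).deriv
  have hHop : Hop m ψ = fun y : ℝ => χ y +
      ((-(1/4 : ℂ) * (y : ℂ) ^ 4 - (m : ℂ) * (y : ℂ)) • (1 : Matrix (Fin 2) (Fin 2) ℂ)
        + (y : ℂ) • σ3 + σ1).mulVec (ψ y) := by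
    funext y
    simp only [Hop]
    rw [hd1, (h2 y).deriv]
  rw [hHop]
  exact h3
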